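/- Let n ≥ 2, let D be the subgroup of diagonal matrices of determinant 1 in SL_n(ℂ), and let α₁ ∈ SL_n(ℂ) be the matrix with 1 in every diagonal entry, 1 in every entry of the last (rightmost) column, and 0 elsewhere. Then the ℂ-linear span of D ∪ α₁Dα₁⁻¹ contains every matrix β ∈ Mat_n(ℂ) whose (i,j) entry is 0 whenever i ≠ j and j < n (i.e., every matrix supported on the diagonal and the last column). -/

import Mathlib

open Matrix Finset

private lemma prod_two_if (n : ℕ) (a b : Fin n) (t : ℂ) (hab : a ≠ b) (ht : t ≠ 0) :
    (∏ i, (if i = a then t else if i = b then t⁻¹ else 1)) = 1 := by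
  rw [← Finset.prod_subset (Finset.subset_univ ({a, b} : Finset (Fin n)))
      (fun x _ hx => by
        simp only [Finset.mem_insert, Finset.mem_singleton, not_or] at hx
        simp [hx.1, hx.2])]
  rw [Finset.prod_pair hab]
  simp [hab.symm, ht]

private def auxN (n : ℕ) : Matrix (Fin n) (Fin n) ℂ :=
  Matrix.of fun i j => if i ≠ j ∧ (j : ℕ) = n - 1 then 1 else 0

private lemma auxN_apply (n : ℕ) (i j : Fin n) :
    auxN n i j = if i ≠ j ∧ (j : ℕ) = n - 1 then 1 else 0 := rfl

private lemma auxN_mul_diag_mul (n : ℕ) (v : Fin n → ℂ) :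
    auxN n * Matrix.diagonal v * auxN n = 0 := by
  ext i j
  have hrw : (auxN n * Matrix.diagonal v * auxN n) i j
      = ∑ k, auxN n i k * v k * auxN n k j := by
    rw [Matrix.mul_apply]
    simp only [Matrix.mul_diagonal]
  rw [hrw, Matrix.zero_apply]
  apply Finset.sum_eq_zero
  intro k _
  by_cases hk : (k : ℕ) = n - 1
  · have h0 : auxN n k j = 0 := by
      rw [auxN_apply, if_neg]
      rintro ⟨h1, h2⟩
      exact h1 (Fin.ext (hk.trans h2.symm))
    rw [h0, mul_zero]
  · have h0 : auxN n i k = 0 := by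
      rw [auxN_apply, if_neg]
      rintro ⟨h1, h2⟩
      exact hk h2
    rw [h0, zero_mul, zero_mul]

private lemma auxN_sq (n : ℕ) : auxN n * auxN n = 0 := by
  have := auxN_mul_diag_mul n (fun _ => 1)
  simpa using this

theorem span_diag_union_conj_col (n : ℕ) (hn : 2 ≤ n)
    (D : Set (Matrix (Fin n) (Fin n) ℂ))
    (hD : D = {x | x.det = 1 ∧ ∀ i j : Fin n, i ≠ j → x i j = 0})
    (α₁ : Matrix (Fin n) (Fin n) ℂ)
    (hα₁ : α₁ = Matrix.of fun i j : Fin n =>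
      if i = j then 1 else if j = (⟨n - 1, by omega⟩ : Fin n) then 1 else 0)
    (β : Matrix (Fin n) (Fin n) ℂ)
    (hβ : ∀ i j : Fin n, i ≠ j → (j : ℕ) < n - 1 → β i j = 0) :
    β ∈ Submodule.span ℂ (D ∪ (fun x => α₁ * x * α₁⁻¹) '' D) := by
  set S := Submodule.span ℂ (D ∪ (fun x => α₁ * x * α₁⁻¹) '' D) with hS
  set last : Fin n := ⟨n - 1, by omega⟩ with hlast
  set N := auxN n with hN
  -- α₁ = 1 + N
  have hα : α₁ = 1 + N := by
    rw [hα₁]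
    ext i j
    by_cases hij : i = j
    · subst hij
      simp [Matrix.one_apply, hN, auxN_apply]
    · have hiff : (j = last) ↔ ((j : ℕ) = n - 1) := by
        constructor
        · intro h; rw [h]
        · intro h; exact Fin.ext h
      by_cases hj : (j : ℕ) = n - 1
      · simp [Matrix.one_apply, hN, auxN_apply, hij, hj, hiff]
      · simp [Matrix.one_apply, hN, auxN_apply, hij, hj, hiff]
  have hinv : α₁⁻¹ = 1 - N := by
    apply Matrix.inv_eq_right_inv
    have h1 : (1 + N) * (1 - N) = 1 - N * N := by noncomm_ring
    rw [hα, h1, auxN_sq, sub_zero]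
  -- conjugation formula
  have hconj : ∀ v : Fin n → ℂ,
      α₁ * Matrix.diagonal v * α₁⁻¹ - Matrix.diagonal v
        = N * Matrix.diagonal v - Matrix.diagonal v * N := by
    intro v
    have h1 : (1 + N) * Matrix.diagonal v * (1 - N) - Matrix.diagonal v
        = N * Matrix.diagonal v - Matrix.diagonal v * N
          - N * Matrix.diagonal v * N := by noncomm_ring
    rw [hα, hinv, h1, ← hN] at *
    rw [hN, auxN_mul_diag_mul, sub_zero]
  -- membership of diagonal det-one matrices
  have hmemD : ∀ v : Fin n → ℂ, (∏ i, v i) = 1 → Matrix.diagonal v ∈ D := by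
    intro v hv
    rw [hD]
    exact ⟨by rw [Matrix.det_diagonal]; exact hv,
      fun i j hij => Matrix.diagonal_apply_ne v hij⟩
  have hdiagS : ∀ v : Fin n → ℂ, (∏ i, v i) = 1 → Matrix.diagonal v ∈ S :=
    fun v hv => Submodule.subset_span (Or.inl (hmemD v hv))
  have hconjS : ∀ v : Fin n → ℂ, (∏ i, v i) = 1 →
      α₁ * Matrix.diagonal v * α₁⁻¹ ∈ S :=
    fun v hv => Submodule.subset_span (Or.inr ⟨Matrix.diagonal v, hmemD v hv, rfl⟩)
  have hΔS : ∀ v : Fin n → ℂ, (∏ i, v i) = 1 →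
      N * Matrix.diagonal v - Matrix.diagonal v * N ∈ S := by
    intro v hv
    rw [← hconj v]
    exact Submodule.sub_mem _ (hconjS v hv) (hdiagS v hv)
  -- diagonal unit matrices
  have hEd : ∀ k : Fin n,
      Matrix.diagonal (fun i => if i = k then (1:ℂ) else 0) ∈ S := by
    intro k
    obtain ⟨m, hm⟩ := Fintype.exists_ne_of_one_lt_card (by simpa using (show 1 < n by omega)) k
    have key : Matrix.diagonal (fun i => if i = k then (1:ℂ) else 0)
        = (1/3 : ℂ) • Matrix.diagonal (fun i => if i = k then (1:ℂ) else if i = m then 1⁻¹ else 1)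
          + (-1 : ℂ) • Matrix.diagonal (fun i => if i = k then (2:ℂ) else if i = m then 2⁻¹ else 1)
          + (2/3 : ℂ) • Matrix.diagonal (fun i => if i = k then (4:ℂ) else if i = m then 4⁻¹ else 1) := by
      ext i j
      by_cases hij : i = j
      · subst hij
        by_cases hik : i = k
        · simp [hik, Matrix.diagonal_apply_eq]; norm_num
        · by_cases him : i = m
          · simp [hik, him, hm, Matrix.diagonal_apply_eq]; norm_num
          · simp [hik, him, Matrix.diagonal_apply_eq]; norm_num
      · simp [Matrix.diagonal_apply_ne _ hij, Matrix.one_apply_ne hij]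
    rw [key]
    refine Submodule.add_mem _ (Submodule.add_mem _ ?_ ?_) ?_ <;>
      exact Submodule.smul_mem _ _
        (hdiagS _ (prod_two_if n k m _ (Ne.symm hm) (by norm_num)))
  -- last-column unit matrices
  have hEc : ∀ k : Fin n, k ≠ last →
      (Matrix.of fun i j => if i = k ∧ j = last then (1:ℂ) else 0) ∈ S := by
    intro k hk
    set v : ℂ → Fin n → ℂ := fun t i => if i = k then t else if i = last then t⁻¹ else 1 with hv
    have hΔ : ∀ t : ℂ, (N * Matrix.diagonal (v t) - Matrix.diagonal (v t) * N)
        = Matrix.of fun i j =>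
            if i ≠ j ∧ j = last then (v t last - v t i) else 0 := by
      intro t
      ext i j
      simp only [Matrix.sub_apply, Matrix.mul_diagonal, Matrix.diagonal_mul,
        Matrix.of_apply, hN, auxN_apply]
      by_cases h1 : (j : ℕ) = n - 1
      · have hjl : j = last := Fin.ext h1
        subst hjl
        by_cases h2 : i = last
        · simp [h2]
        · simp only [ne_eq, h2, not_false_iff, h1, and_self, if_true, true_and,
            and_true, if_pos]
          try ring
      · have h2 : j ≠ last := fun hc => h1 (by rw [hc])
        simp [h1, h2]
    have key : (Matrix.of fun i j => if i = k ∧ j = last then (1:ℂ) else 0)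
        = (-(4/3) : ℂ) • (N * Matrix.diagonal (v 2) - Matrix.diagonal (v 2) * N)
          + (-(2/3) : ℂ) • (N * Matrix.diagonal (v 2⁻¹) - Matrix.diagonal (v 2⁻¹) * N) := by
      rw [hΔ, hΔ]
      ext i j
      simp only [Matrix.add_apply, Matrix.smul_apply, Matrix.of_apply, smul_eq_mul]
      have hvl : ∀ t : ℂ, v t last = t⁻¹ := by
        intro t; simp [hv, Ne.symm hk]
      by_cases hjl : j = last
      · by_cases hijne : i = j
        · have hnk : ¬(i = k ∧ j = last) :=
            fun hc => hk (hc.1.symm.trans (hijne.trans hjl))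
          rw [if_neg hnk, if_neg (fun hc : i ≠ j ∧ j = last => hc.1 hijne),
            if_neg (fun hc : i ≠ j ∧ j = last => hc.1 hijne)]
          ring
        · by_cases hik : i = k
          · rw [if_pos ⟨hik, hjl⟩, if_pos ⟨hijne, hjl⟩, if_pos ⟨hijne, hjl⟩]
            simp only [hvl, hik]
            simp [hv]
            norm_num
          · rw [if_neg (fun hc : i = k ∧ j = last => hik hc.1),
              if_pos ⟨hijne, hjl⟩, if_pos ⟨hijne, hjl⟩]
            have hil : i ≠ last := fun hc => hijne (hc.trans hjl.symm)
            simp only [hvl]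
            simp [hv, hik, hil]
            norm_num
      · have h1 : ¬(i = k ∧ j = last) := fun hc => hjl hc.2
        have h2 : ¬(i ≠ j ∧ j = last) := fun hc => hjl hc.2
        rw [if_neg h1, if_neg h2, if_neg h2]
        ring
    rw [key]
    have hp : ∀ t : ℂ, t ≠ 0 → (∏ i, v t i) = 1 := by
      intro t ht
      exact prod_two_if n k last t hk ht
    exact Submodule.add_mem _
      (Submodule.smul_mem _ _ (hΔS _ (hp 2 (by norm_num))))
      (Submodule.smul_mem _ _ (hΔS _ (hp 2⁻¹ (by norm_num))))
  -- decompose β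
  have hdecomp : β
      = (∑ k : Fin n, β k k • Matrix.diagonal (fun i => if i = k then (1:ℂ) else 0))
        + ∑ k ∈ Finset.univ.erase last,
            β k last • (Matrix.of fun i j => if i = k ∧ j = last then (1:ℂ) else 0) := by
    ext i j
    simp only [Matrix.add_apply, Matrix.sum_apply, Matrix.smul_apply, Matrix.of_apply,
      Matrix.diagonal_apply, smul_eq_mul]
    by_cases hij : i = j
    · subst hij
      by_cases hil : i = last
      · rw [Finset.sum_eq_single i (fun k _ hk => by simp [Ne.symm hk])
          (by simp)]
        rw [Finset.sum_eq_zero (fun k hk => by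
          have : k ≠ last := (Finset.mem_erase.mp hk).1
          have : ¬(i = k ∧ i = last) := fun hc => this (hc.1 ▸ hil)
          simp [this])]
        simp
      · rw [Finset.sum_eq_single i (fun k _ hk => by simp [Ne.symm hk])
          (by simp)]
        rw [Finset.sum_eq_zero (fun k hk => by
          have : ¬(i = k ∧ i = last) := fun hc => hil hc.2
          simp [this])]
        simp
    · rw [Finset.sum_eq_zero (fun k _ => by simp [hij])]
      by_cases hjl : j = last
      · have hil : i ≠ last := fun hc => hij (hc.trans hjl.symm)
        rw [Finset.sum_eq_single i
          (fun k hk hki => by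
            rw [if_neg (fun hc : i = k ∧ j = last => hki hc.1.symm), mul_zero])
          (fun hni => absurd (Finset.mem_erase.mpr ⟨hil, Finset.mem_univ i⟩) hni)]
        simp [hjl]
      · rw [Finset.sum_eq_zero (fun k hk => by
          have : ¬(i = k ∧ j = last) := fun hc => hjl hc.2
          simp [this])]
        have : (j : ℕ) < n - 1 := by
          have := j.isLt
          have : (j : ℕ) ≠ n - 1 := fun hc => hjl (Fin.ext hc)
          omega
        rw [hβ i j hij this]
        simp
  rw [hdecomp]
  exact Submodule.add_mem _
    (Submodule.sum_mem _ (fun k _ => Submodule.smul_mem _ _ (hEd k)))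
    (Submodule.sum_mem _ (fun k hk =>
      Submodule.smul_mem _ _ (hEc k (Finset.mem_erase.mp hk).1)))
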